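/- arXiv:1011.0633 — 3 statements merged into one kernel-verified Lean document; each statement's English description precedes it below -/
import Mathlib

section
/- For every (ρ, τ) ∈ [0,∞) × [0,∞) with (ρ, τ) ≠ (0, 0), there exists a unique λ > 0 such that λ ρ ≤ 1 and f_λ(ρ) = τ. (This expresses that the family of Pansu spheres {𝕊_λ}_{λ>0} is a foliation of ℝ^{2n+1} ∖ {0}.) -/
open Real

/-- Profile function of the Pansu sphere `𝕊_λ` of mean curvature `λ`. -/
noncomputable def pansuProfile (lam s : ℝ) : ℝ :=
  (1 / (2 * lam ^ 2)) * (lam * s * Real.sqrt (1 - lam ^ 2 * s ^ 2) + Real.arccos (lam * s))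

lemma pansu_deriv_neg {ρ lam : ℝ} (hρ : 0 < ρ) (hl : 0 < lam) (hu : lam * ρ < 1) :
    ∃ D, HasDerivAt (fun l => pansuProfile l ρ) D lam ∧ D < 0 := by
  have hq0 : (0:ℝ) < 1 - lam ^ 2 * ρ ^ 2 := by nlinarith [mul_pos hl hρ]
  set s := Real.sqrt (1 - lam ^ 2 * ρ ^ 2) with hs_def
  have hs : 0 < s := Real.sqrt_pos.2 hq0
  have hs2 : s ^ 2 = 1 - lam ^ 2 * ρ ^ 2 := Real.sq_sqrt hq0.le
  have hfun : (fun l => pansuProfile l ρ)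
      = fun l => (l * ρ * Real.sqrt (1 - l ^ 2 * ρ ^ 2) + Real.arccos (l * ρ)) / (2 * l ^ 2) := by
    funext l; simp only [pansuProfile]; ring
  have h1 : HasDerivAt (fun l : ℝ => 1 - l ^ 2 * ρ ^ 2) (-(2 * lam * ρ ^ 2)) lam := by
    have := ((hasDerivAt_pow 2 lam).mul_const (ρ ^ 2)).const_sub 1
    simpa [mul_comm, mul_assoc] using this
  have h2 : HasDerivAt (fun l : ℝ => Real.sqrt (1 - l ^ 2 * ρ ^ 2))
      (1 / (2 * s) * -(2 * lam * ρ ^ 2)) lam := by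
    exact (Real.hasDerivAt_sqrt hq0.ne').comp lam h1
  have h3 : HasDerivAt (fun l : ℝ => l * ρ) ρ lam := by
    simpa using (hasDerivAt_id lam).mul_const ρ
  have h4 : HasDerivAt (fun l : ℝ => l * ρ * Real.sqrt (1 - l ^ 2 * ρ ^ 2))
      (ρ * s + lam * ρ * (1 / (2 * s) * -(2 * lam * ρ ^ 2))) lam := h3.mul h2
  have hne1 : lam * ρ ≠ -1 := by nlinarith [mul_pos hl hρ]
  have h5 : HasDerivAt (fun l : ℝ => Real.arccos (l * ρ)) (-(1 / Real.sqrt (1 - (lam * ρ) ^ 2)) * ρ) lam :=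
    HasDerivAt.comp (h₂ := Real.arccos) lam (Real.hasDerivAt_arccos hne1 hu.ne) h3
  have hsq' : Real.sqrt (1 - (lam * ρ) ^ 2) = s := by rw [hs_def, mul_pow]
  rw [hsq'] at h5
  have h6 := h4.add h5
  have h7 : HasDerivAt (fun l : ℝ => 2 * l ^ 2) (2 * (2 * lam)) lam := by
    simpa using (hasDerivAt_pow 2 lam).const_mul 2
  have hg := h6.div h7 (by positivity : 2 * lam ^ 2 ≠ 0)
  rw [show ((fun l : ℝ => l * ρ * Real.sqrt (1 - l ^ 2 * ρ ^ 2)) + fun l => Real.arccos (l * ρ)) / (fun l : ℝ => 2 * l ^ 2) = fun l => pansuProfile l ρ from by rw [hfun]; rfl] at hg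
  simp only [Pi.add_apply] at hg
  refine ⟨_, hg, ?_⟩
  apply div_neg_of_neg_of_pos
  · -- numerator negative
    have hA : ρ * s + lam * ρ * (1 / (2 * s) * -(2 * lam * ρ ^ 2)) + -(1 / s) * ρ
        = -(2 * lam ^ 2 * ρ ^ 3) / s := by
      field_simp
      linear_combination hs2
    rw [hA]
    have hAneg : -(2 * lam ^ 2 * ρ ^ 3) / s < 0 := by
      apply div_neg_of_neg_of_pos _ hs
      have : 0 < 2 * lam ^ 2 * ρ ^ 3 := by positivity
      linarith
    have hB : 0 < lam * ρ * Real.sqrt (1 - lam ^ 2 * ρ ^ 2) + Real.arccos (lam * ρ) := by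
      have := Real.arccos_pos.2 hu
      nlinarith [mul_pos (mul_pos hl hρ) hs]
    have hterm1 : -(2 * lam ^ 2 * ρ ^ 3) / s * (2 * lam ^ 2) < 0 :=
      mul_neg_of_neg_of_pos hAneg (by positivity)
    have hterm2 : 0 < (lam * ρ * Real.sqrt (1 - lam ^ 2 * ρ ^ 2) + Real.arccos (lam * ρ)) * (2 * (2 * lam)) :=
      mul_pos hB (by positivity)
    linarith
  · positivity

lemma pansu_continuousOn {ρ : ℝ} :
    ContinuousOn (fun l => pansuProfile l ρ) {l : ℝ | l ≠ 0} := by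
  unfold pansuProfile
  apply ContinuousOn.mul
  · apply ContinuousOn.div continuousOn_const (by fun_prop)
    intro x hx
    have : (x : ℝ) ≠ 0 := hx
    positivity
  · apply Continuous.continuousOn
    exact Continuous.add (by fun_prop) (Real.continuous_arccos.comp (by fun_prop))

lemma pansu_endpoint {ρ : ℝ} (hρ : 0 < ρ) : pansuProfile ρ⁻¹ ρ = 0 := by
  have h1 : ρ⁻¹ * ρ = 1 := inv_mul_cancel₀ hρ.ne'
  have h2 : (ρ⁻¹) ^ 2 * ρ ^ 2 = 1 := by rw [← mul_pow, h1, one_pow]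
  have h3 : (ρ ^ 2)⁻¹ * ρ ^ 2 = 1 := inv_mul_cancel₀ (by positivity)
  simp [pansuProfile, h1, h2, h3, Real.arccos_one]

lemma arccos_quarter_pi {x : ℝ} (h0 : 0 ≤ x) (h : x ≤ 1 / 2) : π / 4 ≤ Real.arccos x := by
  rw [Real.arccos_eq_pi_div_two_sub_arcsin]
  have hπ := Real.pi_pos
  have h1 : Real.arcsin x ≤ π / 4 := by
    by_contra hc
    push_neg at hc
    have h2 : 2 / π * Real.arcsin x ≤ Real.sin (Real.arcsin x) :=
      Real.mul_le_sin (Real.arcsin_nonneg.2 h0) (Real.arcsin_le_pi_div_two x)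
    rw [Real.sin_arcsin (by linarith) (by linarith)] at h2
    have h3 : 2 / π * (π / 4) < 2 / π * Real.arcsin x := by
      apply mul_lt_mul_of_pos_left hc; positivity
    have h4 : 2 / π * (π / 4) = 1 / 2 := by field_simp; ring
    linarith
  linarith

lemma pansu_strictAntiOn {ρ : ℝ} (hρ : 0 < ρ) :
    StrictAntiOn (fun l => pansuProfile l ρ) (Set.Ioc 0 ρ⁻¹) := by
  apply strictAntiOn_of_deriv_neg (convex_Ioc _ _)
  · exact pansu_continuousOn.mono (fun x hx => ne_of_gt hx.1)
  · intro x hx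
    rw [interior_Ioc] at hx
    have hxρ : x * ρ < 1 := by
      have h1 : ρ⁻¹ * ρ = 1 := inv_mul_cancel₀ hρ.ne'
      nlinarith [mul_pos (sub_pos.2 hx.2) hρ]
    obtain ⟨D, hD, hDneg⟩ := pansu_deriv_neg hρ hx.1 hxρ
    rwa [hD.deriv]

/-- For every `(ρ, τ) ∈ [0,∞) × [0,∞)` with `(ρ, τ) ≠ (0,0)` there is a unique `λ > 0`
with `λρ ≤ 1` and `f_λ(ρ) = τ`: the Pansu spheres foliate the punctured space. -/
theorem pansuSpheres_foliate (ρ τ : ℝ) (hρ : 0 ≤ ρ) (hτ : 0 ≤ τ)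
    (hne : (ρ, τ) ≠ (0, 0)) :
    ∃! lam : ℝ, 0 < lam ∧ lam * ρ ≤ 1 ∧ pansuProfile lam ρ = τ := by
  have hπ := Real.pi_pos
  rcases eq_or_lt_of_le hρ with hρ0 | hρpos
  · -- ρ = 0
    have hρ0' : ρ = 0 := hρ0.symm
    subst hρ0'
    have hτpos : 0 < τ := by
      rcases hτ.lt_or_eq with h | h
      · exact h
      · exact absurd (by rw [← h]) hne
    set lam := Real.sqrt (π / (4 * τ)) with hlam_def
    have hlp : 0 < π / (4 * τ) := by positivity
    have hlam : 0 < lam := Real.sqrt_pos.2 hlp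
    have hsq : lam ^ 2 = π / (4 * τ) := Real.sq_sqrt hlp.le
    have hval : ∀ l : ℝ, 0 < l → pansuProfile l 0 = π / (4 * l ^ 2) := by
      intro l hl
      unfold pansuProfile
      rw [mul_zero, Real.arccos_zero, zero_mul, zero_add]
      ring
    refine ⟨lam, ⟨hlam, by simp, ?_⟩, ?_⟩
    · rw [hval lam hlam, hsq]
      field_simp
    · rintro y ⟨hy, -, hyv⟩
      rw [hval y hy] at hyv
      have h1 : π = 4 * y ^ 2 * τ := by field_simp at hyv; linarith
      have h2 : π = 4 * lam ^ 2 * τ := by rw [hsq]; field_simp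
      have h4 : 4 * y ^ 2 * τ = 4 * lam ^ 2 * τ := by linarith
      have h3 : y ^ 2 = lam ^ 2 := by
        have := mul_right_cancel₀ (ne_of_gt hτpos) h4
        linarith
      rw [← Real.sqrt_sq hy.le, h3, Real.sqrt_sq hlam.le]
  · -- ρ > 0
    have hanti := pansu_strictAntiOn hρpos
    have hmem : ∀ y : ℝ, 0 < y → y * ρ ≤ 1 → y ∈ Set.Ioc 0 ρ⁻¹ := by
      intro y hy hyρ
      refine ⟨hy, ?_⟩
      rw [inv_eq_one_div, le_div_iff₀ hρpos]
      exact hyρ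
    have huniq : ∀ y₁ y₂ : ℝ, (0 < y₁ ∧ y₁ * ρ ≤ 1 ∧ pansuProfile y₁ ρ = τ) →
        (0 < y₂ ∧ y₂ * ρ ≤ 1 ∧ pansuProfile y₂ ρ = τ) → y₁ = y₂ := by
      intro y₁ y₂ h1 h2
      exact hanti.injOn (hmem y₁ h1.1 h1.2.1) (hmem y₂ h2.1 h2.2.1)
        (by rw [h1.2.2, h2.2.2])
    have hex : ∃ lam : ℝ, 0 < lam ∧ lam * ρ ≤ 1 ∧ pansuProfile lam ρ = τ := by
      rcases eq_or_lt_of_le hτ with hτ0 | hτpos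
      · exact ⟨ρ⁻¹, by positivity, le_of_eq (inv_mul_cancel₀ hρpos.ne'),
          by rw [pansu_endpoint hρpos, hτ0]⟩
      · set a := min ((2 * ρ)⁻¹) (Real.sqrt (π / (8 * τ))) with ha_def
        have ha0 : 0 < a := lt_min (by positivity) (Real.sqrt_pos.2 (by positivity))
        have haρ : a * ρ ≤ 1 / 2 := by
          have h := min_le_left ((2 * ρ)⁻¹) (Real.sqrt (π / (8 * τ)))
          have h2 : (2 * ρ)⁻¹ * ρ = 1 / 2 := by field_simp
          nlinarith [mul_le_mul_of_nonneg_right h hρpos.le]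
        have ha2 : a ^ 2 ≤ π / (8 * τ) := by
          have h := min_le_right ((2 * ρ)⁻¹) (Real.sqrt (π / (8 * τ)))
          calc a ^ 2 ≤ (Real.sqrt (π / (8 * τ))) ^ 2 := by
                apply pow_le_pow_left₀ ha0.le h
            _ = π / (8 * τ) := Real.sq_sqrt (by positivity)
        have ha2' : 8 * τ * a ^ 2 ≤ π := by
          have h := mul_le_mul_of_nonneg_left ha2 (by positivity : (0:ℝ) ≤ 8 * τ)
          have h2 : 8 * τ * (π / (8 * τ)) = π := by field_simp
          linarith
        have hτa : τ ≤ pansuProfile a ρ := by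
          have harc : π / 4 ≤ Real.arccos (a * ρ) :=
            arccos_quarter_pi (by positivity) haρ
          have hX : 0 ≤ a * ρ * Real.sqrt (1 - a ^ 2 * ρ ^ 2) := by positivity
          have h1 : 1 / (2 * a ^ 2) * (π / 4) ≤ pansuProfile a ρ := by
            rw [pansuProfile]
            apply mul_le_mul_of_nonneg_left (by linarith) (by positivity)
          have h8 : 1 / (2 * a ^ 2) * (π / 4) = π / (8 * a ^ 2) := by ring
          have hτ8 : τ ≤ π / (8 * a ^ 2) := by
            rw [le_div_iff₀ (by positivity)]
            nlinarith
          linarith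
        have haρinv : a ≤ ρ⁻¹ := by
          have h := min_le_left ((2 * ρ)⁻¹) (Real.sqrt (π / (8 * τ)))
          have h2 : (2 * ρ)⁻¹ ≤ ρ⁻¹ := by gcongr <;> linarith
          linarith
        have hIcc : Set.Icc a ρ⁻¹ ⊆ Set.Ioc 0 ρ⁻¹ :=
          fun x hx => ⟨lt_of_lt_of_le ha0 hx.1, hx.2⟩
        have hcont : ContinuousOn (fun l => pansuProfile l ρ) (Set.Icc a ρ⁻¹) :=
          pansu_continuousOn.mono (fun x hx => ne_of_gt ((hIcc hx).1))
        have hmemτ : τ ∈ Set.Icc (pansuProfile ρ⁻¹ ρ) (pansuProfile a ρ) := by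
          rw [pansu_endpoint hρpos]
          exact ⟨hτ, hτa⟩
        obtain ⟨lam, hlamIcc, hlamval⟩ := intermediate_value_Icc' haρinv hcont hmemτ
        have hlampos : 0 < lam := lt_of_lt_of_le ha0 hlamIcc.1
        have hlamρ : lam * ρ ≤ 1 := by
          have := hlamIcc.2
          rw [inv_eq_one_div, le_div_iff₀ hρpos] at this
          exact this
        exact ⟨lam, hlampos, hlamρ, hlamval⟩
    obtain ⟨lam, hlam⟩ := hex
    exact ⟨lam, hlam, fun y hy => huniq y lam hy hlam⟩
end

section
/- Let λ > 0 and n ≥ 1. There exists a constant C > 0 (depending only on λ and n) such that for every z ∈ ℝ^{2n} with 0 < |z| ≤ 1/(2λ) and all i, j ∈ {1, …, 2n}, the second partial derivatives of u_λ satisfy |∂²u_λ/∂z_i ∂z_j (z)| ≤ C |z|; consequently |∂²u_λ/∂z_i ∂z_j (z)| ≤ C |∇u_λ(z) + F(z)|. -/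
open Real

/-- The function `u_λ(z) = f_λ(|z|)` whose graph is the upper half of the Pansu sphere. -/
noncomputable def pansuGraph (lam : ℝ) (n : ℕ) (z : EuclideanSpace ℝ (Fin (2 * n))) : ℝ :=
  pansuProfile lam ‖z‖

/-- The linear map `F(x₁, y₁, …, x_n, y_n) = (−y₁, x₁, …, −y_n, x_n)` on `ℝ^{2n}`. -/
def Fmap (n : ℕ) (z : EuclideanSpace ℝ (Fin (2 * n))) : EuclideanSpace ℝ (Fin (2 * n)) :=
  WithLp.toLp 2 (fun i : Fin (2 * n) => if h : (i : ℕ) % 2 = 0 then -z ⟨(i : ℕ) + 1, by omega⟩ else z ⟨(i : ℕ) - 1, by omega⟩)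

noncomputable def pansuP (lam t : ℝ) : ℝ :=
  -lam * Real.sqrt t / (2 * Real.sqrt (1 - lam ^ 2 * t))

noncomputable def pansuQ (lam t : ℝ) : ℝ :=
  ((-lam * (1 / (2 * Real.sqrt t))) * (2 * Real.sqrt (1 - lam ^ 2 * t))
    - (-lam * Real.sqrt t) * (2 * (-(lam ^ 2 * 1) / (2 * Real.sqrt (1 - lam ^ 2 * t)))))
    / (2 * Real.sqrt (1 - lam ^ 2 * t)) ^ 2

lemma profile_hasDerivAt {lam s : ℝ} (hlam : 0 < lam) (h : lam ^ 2 * s ^ 2 < 1) :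
    HasDerivAt (pansuProfile lam) (-lam * s ^ 2 / Real.sqrt (1 - lam ^ 2 * s ^ 2)) s := by
  have hg : 0 < 1 - lam ^ 2 * s ^ 2 := by linarith
  have hx1 : lam * s ≠ -1 := by intro h'; nlinarith [sq_nonneg (lam * s)]
  have hx2 : lam * s ≠ 1 := by intro h'; nlinarith [sq_nonneg (lam * s)]
  have hS : 0 < Real.sqrt (1 - lam ^ 2 * s ^ 2) := Real.sqrt_pos.2 hg
  have hS2 : Real.sqrt (1 - lam ^ 2 * s ^ 2) * Real.sqrt (1 - lam ^ 2 * s ^ 2)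
      = 1 - lam ^ 2 * s ^ 2 := Real.mul_self_sqrt hg.le
  have hid : HasDerivAt (fun s : ℝ => lam * s) lam s := by
    simpa using (hasDerivAt_id s).const_mul lam
  have hinner : HasDerivAt (fun s : ℝ => 1 - lam ^ 2 * s ^ 2) (-(lam ^ 2 * (2 * s))) s := by
    simpa using ((hasDerivAt_pow 2 s).const_mul (lam ^ 2)).const_sub 1
  have hsqrt := hinner.sqrt hg.ne'
  have hprod := hid.mul hsqrt
  have harc : HasDerivAt (fun s : ℝ => Real.arccos (lam * s))
      (-(1 / Real.sqrt (1 - (lam * s) ^ 2)) * lam) s :=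
    (Real.hasDerivAt_arccos hx1 hx2).comp s hid
  have hsum := (hprod.add harc).const_mul (1 / (2 * lam ^ 2))
  have hrw : (1 - (lam * s) ^ 2) = 1 - lam ^ 2 * s ^ 2 := by ring
  rw [hrw] at harc hsum
  refine hsum.congr_deriv ?_; symm
  field_simp
  linear_combination (-1 : ℝ) * hS2

lemma phi_hasDerivAt {lam t : ℝ} (hlam : 0 < lam) (ht : 0 < t) (h1 : lam ^ 2 * t < 1) :
    HasDerivAt (fun t => pansuProfile lam (Real.sqrt t)) (pansuP lam t) t := by
  have hst : Real.sqrt t ^ 2 = t := Real.sq_sqrt ht.le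
  have hs0 : 0 < Real.sqrt t := Real.sqrt_pos.2 ht
  have hg : 0 < 1 - lam ^ 2 * t := by linarith
  have hG : 0 < Real.sqrt (1 - lam ^ 2 * t) := Real.sqrt_pos.2 hg
  have h2 : lam ^ 2 * Real.sqrt t ^ 2 < 1 := by rw [hst]; exact h1
  have hcomp := (profile_hasDerivAt hlam h2).comp t (Real.hasDerivAt_sqrt ht.ne')
  rw [show (fun t => pansuProfile lam (Real.sqrt t)) = pansuProfile lam ∘ Real.sqrt from rfl]
  refine hcomp.congr_deriv ?_; symm
  rw [hst]
  unfold pansuP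
  have hts : t = Real.sqrt t * Real.sqrt t := (Real.mul_self_sqrt ht.le).symm
  field_simp
  ring_nf
  linear_combination (-1 : ℝ) * hst

lemma p_hasDerivAt {lam t : ℝ} (hlam : 0 < lam) (ht : 0 < t) (h1 : lam ^ 2 * t < 1) :
    HasDerivAt (pansuP lam) (pansuQ lam t) t := by
  have hg : 0 < 1 - lam ^ 2 * t := by linarith
  have hG : 0 < Real.sqrt (1 - lam ^ 2 * t) := Real.sqrt_pos.2 hg
  have hnum : HasDerivAt (fun t : ℝ => -lam * Real.sqrt t) (-lam * (1 / (2 * Real.sqrt t))) t :=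
    (Real.hasDerivAt_sqrt ht.ne').const_mul (-lam)
  have hinner : HasDerivAt (fun t : ℝ => 1 - lam ^ 2 * t) (-(lam ^ 2 * 1)) t := by
    simpa using ((hasDerivAt_id t).const_mul (lam ^ 2)).const_sub 1
  have hden : HasDerivAt (fun t : ℝ => 2 * Real.sqrt (1 - lam ^ 2 * t))
      (2 * (-(lam ^ 2 * 1) / (2 * Real.sqrt (1 - lam ^ 2 * t)))) t :=
    (hinner.sqrt hg.ne').const_mul 2
  have hdne : (2 : ℝ) * Real.sqrt (1 - lam ^ 2 * t) ≠ 0 := by positivity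
  exact hnum.div hden hdne

lemma bound_main {lam r a b d : ℝ} (hlam : 0 < lam) (hr : 0 < r) (hhalf : lam * r ≤ 1 / 2)
    (ha : |a| ≤ r) (hb : |b| ≤ r) (hd : |d| ≤ 1) :
    |2 * pansuP lam (r ^ 2) * d + 4 * pansuQ lam (r ^ 2) * (a * b)| ≤ 4 * lam * r := by
  have hlr : 0 < lam * r := mul_pos hlam hr
  have hg : (3:ℝ)/4 ≤ 1 - lam ^ 2 * r ^ 2 := by nlinarith [mul_self_nonneg (1/2 - lam*r)]
  have hg0 : (0:ℝ) < 1 - lam ^ 2 * r ^ 2 := by linarith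
  have hsq : Real.sqrt (r ^ 2) = r := Real.sqrt_sq hr.le
  set G := Real.sqrt (1 - lam ^ 2 * r ^ 2) with hGdef
  have hG2 : G ^ 2 = 1 - lam ^ 2 * r ^ 2 := Real.sq_sqrt hg0.le
  have hG0 : 0 < G := Real.sqrt_pos.2 hg0
  have hGlb : (5:ℝ)/6 ≤ G := by nlinarith [hG2, hG0.le]
  have hG3 : (1:ℝ)/2 ≤ G ^ 3 := by nlinarith [hGlb, hG0.le]
  have hP : pansuP lam (r ^ 2) = -(lam * r / (2 * G)) := by
    unfold pansuP; rw [hsq]; ring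
  have hQ : pansuQ lam (r ^ 2) = -((lam * G / r + lam ^ 3 * r / G) / (4 * G ^ 2)) := by
    unfold pansuQ; rw [hsq, ← hGdef]
    field_simp
    ring
  have h1 : |2 * pansuP lam (r ^ 2) * d| ≤ 2 * lam * r := by
    rw [hP, abs_mul]
    have hx : (0:ℝ) ≤ lam * r / (2 * G) := by positivity
    have : |2 * -(lam * r / (2 * G))| = lam * r / G := by
      rw [abs_of_nonpos (by linarith : 2 * -(lam * r / (2 * G)) ≤ 0)]
      field_simp
    rw [this]
    calc lam * r / G * |d| ≤ lam * r / G * 1 := by gcongr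
      _ ≤ 2 * lam * r := by
          rw [mul_one, div_le_iff₀ hG0]
          nlinarith [mul_nonneg hlr.le (by linarith : (0:ℝ) ≤ G - 5/6)]
  have h2 : |4 * pansuQ lam (r ^ 2) * (a * b)| ≤ 2 * lam * r := by
    rw [hQ, abs_mul]
    have hx : (0:ℝ) ≤ (lam * G / r + lam ^ 3 * r / G) / (4 * G ^ 2) := by positivity
    have he : |4 * -((lam * G / r + lam ^ 3 * r / G) / (4 * G ^ 2))|
        = (lam * G / r + lam ^ 3 * r / G) / G ^ 2 := by
      rw [abs_of_nonpos (by linarith : 4 * -((lam * G / r + lam ^ 3 * r / G) / (4 * G ^ 2)) ≤ 0)]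
      field_simp
    rw [he]
    have hab : |a * b| ≤ r ^ 2 := by
      rw [abs_mul, sq]
      exact mul_le_mul ha hb (abs_nonneg b) hr.le
    have key : (lam * G / r + lam ^ 3 * r / G) / G ^ 2 * r ^ 2
        = lam * r * (G ^ 2 + lam ^ 2 * r ^ 2) / G ^ 3 := by
      field_simp
    calc (lam * G / r + lam ^ 3 * r / G) / G ^ 2 * |a * b|
        ≤ (lam * G / r + lam ^ 3 * r / G) / G ^ 2 * r ^ 2 := by gcongr
      _ = lam * r * (G ^ 2 + lam ^ 2 * r ^ 2) / G ^ 3 := key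
      _ = lam * r / G ^ 3 := by rw [hG2]; ring_nf
      _ ≤ 2 * lam * r := by
          rw [div_le_iff₀ (by positivity)]
          nlinarith [mul_nonneg hlr.le (by linarith : (0:ℝ) ≤ G ^ 3 - 1/2)]
  calc |2 * pansuP lam (r ^ 2) * d + 4 * pansuQ lam (r ^ 2) * (a * b)|
      ≤ |2 * pansuP lam (r ^ 2) * d| + |4 * pansuQ lam (r ^ 2) * (a * b)| := abs_add_le _ _
    _ ≤ 4 * lam * r := by linarith

lemma graph_eq (lam : ℝ) (n : ℕ) :
    pansuGraph lam n = fun y : EuclideanSpace ℝ (Fin (2 * n)) =>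
      pansuProfile lam (Real.sqrt (‖y‖ ^ 2)) :=
  funext fun y => by rw [Real.sqrt_sq (norm_nonneg y)]; rfl

lemma graph_hasFDerivAt {lam : ℝ} (hlam : 0 < lam) {n : ℕ}
    {y : EuclideanSpace ℝ (Fin (2 * n))} (hy : 0 < ‖y‖) (hy1 : ‖y‖ < 1 / lam) :
    HasFDerivAt (pansuGraph lam n) ((2 * pansuP lam (‖y‖ ^ 2)) • (innerSL ℝ y)) y := by
  have ht : 0 < ‖y‖ ^ 2 := by positivity
  have h1 : lam ^ 2 * ‖y‖ ^ 2 < 1 := by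
    have : lam * ‖y‖ < 1 := by
      rw [lt_div_iff₀ hlam] at hy1; nlinarith
    nlinarith [mul_pos hlam hy]
  have hphi := phi_hasDerivAt hlam ht h1
  have hns : HasFDerivAt (fun y : EuclideanSpace ℝ (Fin (2 * n)) => ‖y‖ ^ 2)
      (2 • (innerSL ℝ y)) y := (hasStrictFDerivAt_norm_sq y).hasFDerivAt
  have hc := hphi.comp_hasFDerivAt y hns
  rw [graph_eq lam n]
  refine hc.congr_fderiv ?_
  ext v
  simp only [ContinuousLinearMap.coe_smul', Pi.smul_apply, smul_eq_mul,
    ContinuousLinearMap.smul_apply]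
  ring

lemma profile_contDiffAt {lam s : ℝ} (h : lam ^ 2 * s ^ 2 < 1) :
    ContDiffAt ℝ 2 (pansuProfile lam) s := by
  have hg : 0 < 1 - lam ^ 2 * s ^ 2 := by linarith
  have hx1 : lam * s ≠ -1 := by intro h'; nlinarith [sq_nonneg (lam * s)]
  have hx2 : lam * s ≠ 1 := by intro h'; nlinarith [sq_nonneg (lam * s)]
  have h1 : ContDiffAt ℝ 2 (fun s : ℝ => 1 - lam ^ 2 * s ^ 2) s := by fun_prop
  have hls : ContDiffAt ℝ 2 (fun s : ℝ => lam * s) s := by fun_prop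
  have hsq : ContDiffAt ℝ 2 (fun s : ℝ => Real.sqrt (1 - lam ^ 2 * s ^ 2)) s :=
    (Real.contDiffAt_sqrt hg.ne').comp s h1
  have harc : ContDiffAt ℝ 2 (fun s : ℝ => Real.arccos (lam * s)) s :=
    (Real.contDiffAt_arccos hx1 hx2).comp s hls
  have : ContDiffAt ℝ 2
      (fun s : ℝ => (1 / (2 * lam ^ 2)) *
        (lam * s * Real.sqrt (1 - lam ^ 2 * s ^ 2) + Real.arccos (lam * s))) s :=
    contDiffAt_const.mul ((hls.mul hsq).add harc)
  exact this

lemma graph_contDiffAt {lam : ℝ} (hlam : 0 < lam) {n : ℕ}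
    {z : EuclideanSpace ℝ (Fin (2 * n))} (hz : 0 < ‖z‖) (hz1 : ‖z‖ < 1 / lam) :
    ContDiffAt ℝ 2 (pansuGraph lam n) z := by
  have ht : (0:ℝ) < ‖z‖ ^ 2 := by positivity
  have h1 : lam ^ 2 * Real.sqrt (‖z‖ ^ 2) ^ 2 < 1 := by
    rw [Real.sq_sqrt ht.le]
    have : lam * ‖z‖ < 1 := by rw [lt_div_iff₀ hlam] at hz1; nlinarith
    nlinarith [mul_pos hlam hz]
  rw [graph_eq lam n]
  exact ((profile_contDiffAt h1).comp (‖z‖ ^ 2) (Real.contDiffAt_sqrt ht.ne')).comp (g := pansuProfile lam ∘ Real.sqrt) z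
    ((contDiff_norm_sq ℝ).contDiffAt)

lemma graph_second_deriv {lam : ℝ} (hlam : 0 < lam) {n : ℕ}
    {z : EuclideanSpace ℝ (Fin (2 * n))} (hz : 0 < ‖z‖) (hz1 : ‖z‖ < 1 / lam)
    (i j : Fin (2 * n)) :
    iteratedFDeriv ℝ 2 (pansuGraph lam n) z
        ![EuclideanSpace.single i 1, EuclideanSpace.single j 1]
      = 2 * pansuP lam (‖z‖ ^ 2) * (if i = j then 1 else 0)
        + 4 * pansuQ lam (‖z‖ ^ 2) * (z i * z j) := by
  classical
  have ht : (0:ℝ) < ‖z‖ ^ 2 := by positivity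
  have hlt : lam * ‖z‖ < 1 := by rw [lt_div_iff₀ hlam] at hz1; nlinarith
  have h1 : lam ^ 2 * ‖z‖ ^ 2 < 1 := by nlinarith [mul_pos hlam hz]
  set U : Set (EuclideanSpace ℝ (Fin (2 * n))) := (fun y => ‖y‖) ⁻¹' Set.Ioo 0 (1 / lam)
    with hUdef
  have hU : IsOpen U := isOpen_Ioo.preimage continuous_norm
  have hzU : z ∈ U := ⟨hz, hz1⟩
  have hmem : U ∈ nhds z := hU.mem_nhds hzU
  -- eventual formula for the directional derivative
  have hev : (fun y => fderiv ℝ (pansuGraph lam n) y (EuclideanSpace.single j 1))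
      =ᶠ[nhds z] (fun y => (2 * pansuP lam (‖y‖ ^ 2)) * (y j)) := by
    filter_upwards [hmem] with y hy
    rw [(graph_hasFDerivAt hlam hy.1 hy.2).fderiv]
    simp [EuclideanSpace.inner_single_right, mul_comm]
  -- derivative of the RHS
  have hns : HasFDerivAt (fun y : EuclideanSpace ℝ (Fin (2 * n)) => ‖y‖ ^ 2)
      (2 • (innerSL ℝ z)) z := (hasStrictFDerivAt_norm_sq z).hasFDerivAt
  have hc : HasFDerivAt (fun y : EuclideanSpace ℝ (Fin (2 * n)) => 2 * pansuP lam (‖y‖ ^ 2))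
      ((2 * pansuQ lam (‖z‖ ^ 2)) • (2 • (innerSL ℝ z))) z :=
    ((p_hasDerivAt hlam ht h1).const_mul 2).comp_hasFDerivAt (f := fun y : EuclideanSpace ℝ (Fin (2 * n)) => ‖y‖ ^ 2) z hns
  have hproj : HasFDerivAt (fun y : EuclideanSpace ℝ (Fin (2 * n)) => y j)
      (EuclideanSpace.proj j : EuclideanSpace ℝ (Fin (2 * n)) →L[ℝ] ℝ) z :=
    (EuclideanSpace.proj j : EuclideanSpace ℝ (Fin (2 * n)) →L[ℝ] ℝ).hasFDerivAt
  have hmul := hc.mul hproj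
  have hfd2 : fderiv ℝ (fun y => fderiv ℝ (pansuGraph lam n) y (EuclideanSpace.single j 1)) z
      = (2 * pansuP lam (‖z‖ ^ 2)) • (EuclideanSpace.proj j : EuclideanSpace ℝ (Fin (2 * n)) →L[ℝ] ℝ)
        + (z j) • ((2 * pansuQ lam (‖z‖ ^ 2)) • (2 • (innerSL ℝ z))) :=
    hev.fderiv_eq.trans hmul.fderiv
  -- differentiate the full derivative map
  have hcd := graph_contDiffAt hlam hz hz1
  have hdiff : DifferentiableAt ℝ (fderiv ℝ (pansuGraph lam n)) z :=
    (hcd.fderiv_right (m := 1) (by norm_num)).differentiableAt one_ne_zero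
  have hclm := fderiv_clm_apply (𝕜 := ℝ) (c := fderiv ℝ (pansuGraph lam n))
    (u := fun _ => EuclideanSpace.single j 1) hdiff (differentiableAt_const _)
  rw [iteratedFDeriv_two_apply]
  simp only [Matrix.cons_val_zero, Matrix.cons_val_one, Matrix.head_cons]
  have hlink : fderiv ℝ (fderiv ℝ (pansuGraph lam n)) z (EuclideanSpace.single i 1)
        (EuclideanSpace.single j 1)
      = fderiv ℝ (fun y => fderiv ℝ (pansuGraph lam n) y (EuclideanSpace.single j 1)) z
        (EuclideanSpace.single i 1) := by
    rw [hclm]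
    simp
  rw [hlink, hfd2]
  simp only [ContinuousLinearMap.add_apply, ContinuousLinearMap.smul_apply, smul_eq_mul,
    PiLp.proj_apply, EuclideanSpace.single_apply, EuclideanSpace.inner_single_right]
  rcases eq_or_ne i j with rfl | hij
  · simp [EuclideanSpace.inner_single_right, real_inner_comm]
    ring
  · simp [hij, Ne.symm hij, EuclideanSpace.inner_single_right]
    ring

def sigmaF (n : ℕ) : Fin (2 * n) → Fin (2 * n) := fun i =>
  if h : (i : ℕ) % 2 = 0 then ⟨(i : ℕ) + 1, by omega⟩ else ⟨(i : ℕ) - 1, by omega⟩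

lemma sigmaF_invol (n : ℕ) : Function.Involutive (sigmaF n) := by
  intro i
  unfold sigmaF
  by_cases h : (i : ℕ) % 2 = 0
  · rw [dif_pos h]
    have h2 : ¬ (((⟨(i : ℕ) + 1, by omega⟩ : Fin (2 * n)) : ℕ) % 2 = 0) := by simp; omega
    rw [dif_neg h2]
    apply Fin.ext; simp
  · rw [dif_neg h]
    have hpos : 0 < (i : ℕ) := by omega
    have h2 : (((⟨(i : ℕ) - 1, by omega⟩ : Fin (2 * n)) : ℕ) % 2 = 0) := by simp; omega
    rw [dif_pos h2]
    apply Fin.ext; simp; omega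

lemma Fmap_apply (n : ℕ) (z : EuclideanSpace ℝ (Fin (2 * n))) (i : Fin (2 * n)) :
    Fmap n z i = if (i : ℕ) % 2 = 0 then -z (sigmaF n i) else z (sigmaF n i) := by
  unfold Fmap sigmaF
  simp only [WithLp.ofLp_toLp]
  by_cases h : (i : ℕ) % 2 = 0
  · rw [dif_pos h, if_pos h, dif_pos h]
  · rw [dif_neg h, if_neg h, dif_neg h]

lemma norm_Fmap (n : ℕ) (z : EuclideanSpace ℝ (Fin (2 * n))) : ‖Fmap n z‖ = ‖z‖ := by
  rw [EuclideanSpace.norm_eq, EuclideanSpace.norm_eq]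
  congr 1
  have hperm := Equiv.sum_comp (Function.Involutive.toPerm _ (sigmaF_invol n))
    (fun i => ‖z i‖ ^ 2)
  rw [← hperm]
  apply Finset.sum_congr rfl
  intro i _
  rw [Fmap_apply]
  by_cases h : (i : ℕ) % 2 = 0 <;>
    simp [h, Function.Involutive.coe_toPerm]

lemma coord_le_norm {m : ℕ} (z : EuclideanSpace ℝ (Fin m)) (i : Fin m) : |z i| ≤ ‖z‖ := by
  rw [EuclideanSpace.norm_eq]
  rw [show |z i| = Real.sqrt (|z i| ^ 2) from (Real.sqrt_sq (abs_nonneg _)).symm]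
  apply Real.sqrt_le_sqrt
  rw [sq_abs]
  calc z i ^ 2 = ‖z i‖ ^ 2 := by rw [Real.norm_eq_abs, sq_abs]
    _ ≤ _ := Finset.single_le_sum (f := fun k => ‖z k‖ ^ 2) (fun k _ => by positivity)
      (Finset.mem_univ i)

lemma graph_gradient {lam : ℝ} (hlam : 0 < lam) {n : ℕ}
    {z : EuclideanSpace ℝ (Fin (2 * n))} (hz : 0 < ‖z‖) (hz1 : ‖z‖ < 1 / lam) :
    gradient (pansuGraph lam n) z = (2 * pansuP lam (‖z‖ ^ 2)) • z := by
  have hF := graph_hasFDerivAt hlam hz hz1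
  have heq : (InnerProductSpace.toDual ℝ (EuclideanSpace ℝ (Fin (2 * n))))
      ((2 * pansuP lam (‖z‖ ^ 2)) • z) = (2 * pansuP lam (‖z‖ ^ 2)) • innerSL ℝ z := by
    ext v
    simp [real_inner_smul_left]
  have : HasGradientAt (pansuGraph lam n) ((2 * pansuP lam (‖z‖ ^ 2)) • z) z := by
    rw [hasGradientAt_iff_hasFDerivAt, heq]
    exact hF
  exact this.gradient

lemma pansuP_small {lam r : ℝ} (hlam : 0 < lam) (hr : 0 < r) (hhalf : lam * r ≤ 1 / 2) :
    |2 * pansuP lam (r ^ 2)| ≤ 3 / 5 := by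
  have hlr : 0 < lam * r := mul_pos hlam hr
  have hg : (3:ℝ)/4 ≤ 1 - lam ^ 2 * r ^ 2 := by nlinarith [mul_self_nonneg (1/2 - lam*r)]
  have hg0 : (0:ℝ) < 1 - lam ^ 2 * r ^ 2 := by linarith
  have hsq : Real.sqrt (r ^ 2) = r := Real.sqrt_sq hr.le
  set G := Real.sqrt (1 - lam ^ 2 * r ^ 2) with hGdef
  have hG2 : G ^ 2 = 1 - lam ^ 2 * r ^ 2 := Real.sq_sqrt hg0.le
  have hG0 : 0 < G := Real.sqrt_pos.2 hg0
  have hGlb : (5:ℝ)/6 ≤ G := by nlinarith [hG2, hG0.le]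
  have hP : 2 * pansuP lam (r ^ 2) = -(lam * r / G) := by
    unfold pansuP; rw [hsq, ← hGdef]; field_simp
  rw [hP, abs_neg, abs_of_nonneg (by positivity)]
  rw [div_le_iff₀ hG0]
  linarith

/-- For `λ > 0` and `n ≥ 1` there is `C > 0` such that for `0 < |z| ≤ 1/(2λ)` all second
partial derivatives of `u_λ` satisfy `|u_{ij}(z)| ≤ C|z|`, and consequently
`|u_{ij}(z)| ≤ C|∇u_λ(z) + F(z)|`. -/
theorem pansuGraph_second_derivs_bound (lam : ℝ) (hlam : 0 < lam) (n : ℕ) (hn : 1 ≤ n) :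
    ∃ C : ℝ, 0 < C ∧
      ∀ z : EuclideanSpace ℝ (Fin (2 * n)), 0 < ‖z‖ → ‖z‖ ≤ 1 / (2 * lam) →
        ∀ i j : Fin (2 * n),
          |iteratedFDeriv ℝ 2 (pansuGraph lam n) z
              ![EuclideanSpace.single i 1, EuclideanSpace.single j 1]| ≤ C * ‖z‖ ∧
          |iteratedFDeriv ℝ 2 (pansuGraph lam n) z
              ![EuclideanSpace.single i 1, EuclideanSpace.single j 1]| ≤
            C * ‖gradient (pansuGraph lam n) z + Fmap n z‖ := by
  refine ⟨12 * lam, by positivity, ?_⟩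
  intro z hz hz2 i j
  have hz1 : ‖z‖ < 1 / lam := by
    refine lt_of_le_of_lt hz2 ?_
    rw [div_lt_div_iff₀ (by positivity) hlam]
    nlinarith
  have hhalf : lam * ‖z‖ ≤ 1 / 2 := by
    rw [le_div_iff₀ (by positivity : (0:ℝ) < 2 * lam)] at hz2
    nlinarith
  -- first bound
  have hval := graph_second_deriv hlam hz hz1 i j
  have hdle : |(if i = j then (1:ℝ) else 0)| ≤ 1 := by
    split <;> simp
  have hbound := bound_main hlam hz hhalf (coord_le_norm z i) (coord_le_norm z j) hdle
  have h1 : |iteratedFDeriv ℝ 2 (pansuGraph lam n) z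
      ![EuclideanSpace.single i 1, EuclideanSpace.single j 1]| ≤ 4 * lam * ‖z‖ := by
    rw [hval]; exact hbound
  constructor
  · refine h1.trans ?_
    nlinarith [norm_nonneg z]
  · -- lower bound for the gradient term
    have hgrad := graph_gradient hlam hz hz1
    have hsmall := pansuP_small hlam hz hhalf
    have hnF : ‖Fmap n z‖ = ‖z‖ := norm_Fmap n z
    have hng : ‖gradient (pansuGraph lam n) z‖ ≤ 3 / 5 * ‖z‖ := by
      rw [hgrad, norm_smul, Real.norm_eq_abs]
      exact mul_le_mul_of_nonneg_right hsmall (norm_nonneg z)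
    have hlow : ‖z‖ / 3 ≤ ‖gradient (pansuGraph lam n) z + Fmap n z‖ := by
      have htri : ‖Fmap n z‖ ≤ ‖gradient (pansuGraph lam n) z + Fmap n z‖
          + ‖gradient (pansuGraph lam n) z‖ := by
        calc ‖Fmap n z‖ = ‖(gradient (pansuGraph lam n) z + Fmap n z)
              + (-(gradient (pansuGraph lam n) z))‖ := by
              rw [show (gradient (pansuGraph lam n) z + Fmap n z)
                  + -(gradient (pansuGraph lam n) z) = Fmap n z from by abel]
          _ ≤ _ := by
              refine (norm_add_le _ _).trans ?_
              rw [norm_neg]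
        
      rw [hnF] at htri
      linarith
    refine h1.trans ?_
    calc 4 * lam * ‖z‖ = 12 * lam * (‖z‖ / 3) := by ring
      _ ≤ 12 * lam * ‖gradient (pansuGraph lam n) z + Fmap n z‖ := by
          gcongr
end

section
/- Let Q > 1 and set q = (Q − 1)/Q, and let C_I > 0, C > 0 and r₀ ∈ ℝ. Then there is no function V : [r₀, ∞) → ℝ that is differentiable, everywhere positive, nonincreasing, tends to 0 as r → ∞, and satisfies the differential inequality C_I V(r)^q ≤ C V(r) + 2 |V'(r)| for all r ≥ r₀. -/
open Filter

private lemma deriv_nonpos_of_antitoneOn {V : ℝ → ℝ} {r₀ r : ℝ} (hr : r₀ ≤ r)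
    (hd : DifferentiableAt ℝ V r) (ha : AntitoneOn V (Set.Ici r₀)) : deriv V r ≤ 0 := by
  have hs : Tendsto (slope V r) (nhdsWithin r {r}ᶜ) (nhds (deriv V r)) :=
    hasDerivAt_iff_tendsto_slope.1 hd.hasDerivAt
  have hs' : Tendsto (slope V r) (nhdsWithin r (Set.Ioi r)) (nhds (deriv V r)) :=
    hs.mono_left (nhdsWithin_mono _ (fun y hy => ne_of_gt (Set.mem_Ioi.1 hy)))
  refine le_of_tendsto hs' ?_
  filter_upwards [self_mem_nhdsWithin] with y hy
  have hy' : r < y := hy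
  have hVle : V y ≤ V r := ha (Set.mem_Ici.2 hr) (Set.mem_Ici.2 (hr.trans hy'.le)) hy'.le
  have : slope V r y = (V y - V r) / (y - r) := slope_def_field V r y
  rw [this]
  exact div_nonpos_of_nonpos_of_nonneg (by linarith) (by linarith)

/-- The analytic core of the boundedness of isoperimetric regions: there is no positive,
nonincreasing, differentiable function `V` on `[r₀, ∞)` tending to `0` at infinity and
satisfying `C_I V(r)^q ≤ C V(r) + 2|V'(r)|` with `q = (Q−1)/Q`, `Q > 1`. -/
theorem no_positive_solution_of_isoperimetric_ODE (Q : ℝ) (hQ : 1 < Q) (q : ℝ)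
    (hq : q = (Q - 1) / Q) (C_I : ℝ) (hCI : 0 < C_I) (C : ℝ) (hC : 0 < C) (r₀ : ℝ) :
    ¬ ∃ V : ℝ → ℝ,
      (∀ r, r₀ ≤ r → DifferentiableAt ℝ V r) ∧
      (∀ r, r₀ ≤ r → 0 < V r) ∧
      AntitoneOn V (Set.Ici r₀) ∧
      Tendsto V atTop (nhds 0) ∧
      (∀ r, r₀ ≤ r → C_I * V r ^ q ≤ C * V r + 2 * |deriv V r|) := by
  rintro ⟨V, hdiff, hpos, hanti, hlim, hineq⟩
  have hQ0 : (0:ℝ) < Q := by linarith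
  have hq0 : 0 < q := by rw [hq]; exact div_pos (by linarith) hQ0
  have hq1 : q < 1 := by rw [hq, div_lt_one hQ0]; linarith
  have h1q : 0 < 1 - q := by linarith
  -- eventually V r ^ (1-q) ≤ C_I / (2*C)
  have hlim' : Tendsto (fun r => V r ^ (1 - q)) atTop (nhds 0) := by
    have := hlim.rpow_const (p := 1 - q) (Or.inr h1q.le)
    rwa [Real.zero_rpow (ne_of_gt h1q)] at this
  have hev : ∀ᶠ r in atTop, V r ^ (1 - q) ≤ C_I / (2 * C) := by
    have : ∀ᶠ r in atTop, V r ^ (1 - q) < C_I / (2 * C) :=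
      hlim'.eventually (Filter.Tendsto.eventually_lt_const (by positivity) tendsto_id
        |>.mono (fun x hx => hx)) |>.mono (fun x hx => hx)
    exact this.mono fun x hx => hx.le
  obtain ⟨R, hR⟩ := eventually_atTop.1 hev
  set r₁ : ℝ := max r₀ R with hr₁def
  have hr₁ : r₀ ≤ r₁ := le_max_left _ _
  set K : ℝ := (1 - q) * (C_I / 4) with hK
  have hKpos : 0 < K := by positivity
  -- the key derivative bound for g = V ^ (1-q) on [r₁, ∞)
  have key : ∀ r, r₁ ≤ r →
      HasDerivAt (fun x => V x ^ (1 - q)) ((1 - q) * V r ^ (1 - q - 1) * deriv V r) r ∧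
      (1 - q) * V r ^ (1 - q - 1) * deriv V r ≤ -K := by
    intro r hr
    have hr0 : r₀ ≤ r := hr₁.trans hr
    have hVpos := hpos r hr0
    have hd := hdiff r hr0
    have hder : HasDerivAt (fun x => V x ^ (1 - q))
        ((1 - q) * V r ^ (1 - q - 1) * deriv V r) r := by
      have := (hd.hasDerivAt.rpow_const (p := 1 - q) (Or.inl (ne_of_gt hVpos)))
      convert this using 1; ring
    refine ⟨hder, ?_⟩
    -- C * V r ≤ (C_I/2) * V r ^ q
    have hsplit : V r = V r ^ (1 - q) * V r ^ q := by
      rw [← Real.rpow_add hVpos]; simp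
    have hsmall : V r ^ (1 - q) ≤ C_I / (2 * C) := hR r ((le_max_right _ _).trans hr)
    have hqpow : 0 < V r ^ q := Real.rpow_pos_of_pos hVpos q
    have hCV : C * V r ≤ C_I / 2 * V r ^ q := by
      calc C * V r = C * (V r ^ (1 - q) * V r ^ q) := by rw [← hsplit]
        _ ≤ C * (C_I / (2 * C) * V r ^ q) := by
            apply mul_le_mul_of_nonneg_left _ hC.le
            exact mul_le_mul_of_nonneg_right hsmall hqpow.le
        _ = C_I / 2 * V r ^ q := by field_simp
    have hdnp : deriv V r ≤ 0 := deriv_nonpos_of_antitoneOn hr0 hd hanti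
    have habs : |deriv V r| = -deriv V r := abs_of_nonpos hdnp
    have h2 : C_I / 2 * V r ^ q ≤ -2 * deriv V r := by
      have := hineq r hr0
      rw [habs] at this
      linarith
    -- deriv V r ≤ -(C_I/4) * V r ^ q
    have h3 : deriv V r ≤ -(C_I / 4) * V r ^ q := by linarith
    have hnegq : 0 < V r ^ (1 - q - 1) := Real.rpow_pos_of_pos hVpos _
    have hmul : (1 - q) * V r ^ (1 - q - 1) * deriv V r
        ≤ (1 - q) * V r ^ (1 - q - 1) * (-(C_I / 4) * V r ^ q) :=
      mul_le_mul_of_nonneg_left h3 (by positivity)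
    refine hmul.trans_eq ?_
    have hcancel : V r ^ (1 - q - 1) * V r ^ q = 1 := by
      rw [← Real.rpow_add hVpos]
      norm_num
    calc (1 - q) * V r ^ (1 - q - 1) * (-(C_I / 4) * V r ^ q)
        = -((1 - q) * (C_I / 4)) * (V r ^ (1 - q - 1) * V r ^ q) := by ring
      _ = -K := by rw [hcancel, hK]; ring
  -- set g and use MVT
  set g : ℝ → ℝ := fun x => V x ^ (1 - q) with hg
  have hg1pos : 0 < g r₁ := Real.rpow_pos_of_pos (hpos r₁ hr₁) _
  set b : ℝ := r₁ + g r₁ / K + 1 with hb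
  have hr₁b : r₁ < b := by
    have : 0 < g r₁ / K := by positivity
    simp only [hb]; linarith
  have hcont : ContinuousOn g (Set.Icc r₁ b) := fun x hx =>
    ((key x hx.1).1.continuousAt).continuousWithinAt
  have hdiffg : DifferentiableOn ℝ g (Set.Ioo r₁ b) := fun x hx =>
    ((key x hx.1.le).1.differentiableAt).differentiableWithinAt
  obtain ⟨c, hc, hslope⟩ := exists_deriv_eq_slope g hr₁b hcont hdiffg
  have hderivc : deriv g c ≤ -K := by
    have h := key c hc.1.le
    rw [h.1.deriv]; exact h.2
  have hgb : g b - g r₁ ≤ -K * (b - r₁) := by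
    have hba : 0 < b - r₁ := by linarith
    have : (g b - g r₁) / (b - r₁) ≤ -K := hslope ▸ hderivc
    calc g b - g r₁ = (g b - g r₁) / (b - r₁) * (b - r₁) := by field_simp
      _ ≤ -K * (b - r₁) := mul_le_mul_of_nonneg_right this hba.le
  have hgbneg : g b < 0 := by
    have : -K * (b - r₁) = -(g r₁) - K := by
      simp only [hb]; field_simp; ring
    rw [this] at hgb
    linarith
  have : 0 < g b := Real.rpow_pos_of_pos (hpos b (hr₁.trans hr₁b.le)) _
  linarith
end
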